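/- When μ = 0, the Umemura polynomial satisfies U_n(z;0) = z^{n(n+1)/2} for all n ≥ 1; that is, zero is a root of multiplicity n(n+1)/2. -/
import Mathlib

open Polynomial

lemma key9 (k : ℕ) (hk : 1 ≤ k) :
    -X * ((X:ℂ[X])^k * derivative (derivative ((X:ℂ[X])^k)) -
        (derivative ((X:ℂ[X])^k))^2) - X^k * derivative ((X:ℂ[X])^k) +
      (X + C (0:ℂ)) * ((X:ℂ[X])^k)^2 = X^(2*k+1) := by
  match k, hk with
  | 1, _ => simp; ring
  | (m+2), _ =>
    have h1 : derivative ((X:ℂ[X])^(m+2)) = C ((m:ℂ)+2) * X^(m+1) := by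
      rw [derivative_X_pow]; push_cast; norm_num
    have h2 : derivative (C ((m:ℂ)+2) * X^(m+1)) = C ((m:ℂ)+2) * (C ((m:ℂ)+1) * X^m) := by
      rw [derivative_C_mul, derivative_X_pow]; push_cast; norm_num
    rw [h1, h2]
    simp only [C_add, C_1, map_ofNat, map_zero, C_0]
    ring

theorem stmt9 :
    ∀ (U : ℤ → Polynomial ℂ),
      U (-1) = 1 → U 0 = 1 →
      (∀ n : ℤ, 0 ≤ n →
        U (n + 1) * U (n - 1) =
          -Polynomial.X *
              (U n * Polynomial.derivative (Polynomial.derivative (U n)) -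
                (Polynomial.derivative (U n)) ^ 2) -
            U n * Polynomial.derivative (U n) +
            (Polynomial.X + Polynomial.C (0 : ℂ)) * (U n) ^ 2) →
      ∀ n : ℕ, 1 ≤ n → U (n : ℤ) = Polynomial.X ^ (n * (n + 1) / 2) := by
  intro U hm1 h0 hrec
  set t : ℕ → ℕ := fun n => n * (n + 1) / 2 with ht
  have h2t : ∀ n : ℕ, 2 * t n = n * (n + 1) := by
    intro n
    have : 2 ∣ n * (n + 1) := (Nat.even_mul_succ_self n).two_dvd
    simp only [ht]
    omega
  have hU1 : U 1 = X := by
    have := hrec 0 le_rfl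
    simp [h0, hm1] at this
    simpa using this
  have main : ∀ n : ℕ, U (n : ℤ) = X ^ t n ∧ U ((n : ℤ) + 1) = X ^ t (n + 1) := by
    intro n
    induction n with
    | zero => constructor <;> simp [h0, hU1, ht]
    | succ n ih =>
      obtain ⟨ih1, ih2⟩ := ih
      refine ⟨by exact_mod_cast ih2, ?_⟩
      have hrec' := hrec ((n : ℤ) + 1) (by positivity)
      have hn : ((n:ℤ) + 1 - 1) = (n : ℤ) := by ring
      rw [hn, ih1, ih2] at hrec'
      have hk1 : 1 ≤ t (n + 1) := by
        have := h2t (n + 1)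
        have e : (n+1) * (n+1+1) = n*n + 3*n + 2 := by ring
        omega
      rw [key9 _ hk1] at hrec'
      have htt : t (n + 2) + t n = 2 * t (n + 1) + 1 := by
        have a := h2t n; have b := h2t (n+1); have c := h2t (n+2)
        have e : n * (n + 1) + (n+2) * (n+2+1) = 2 * ((n+1) * (n+1+1)) + 2 := by ring
        omega
      have hXne : (X : ℂ[X]) ^ t n ≠ 0 := pow_ne_zero _ X_ne_zero
      have goal : U ((n:ℤ) + 1 + 1) = X ^ t (n + 2) := by
        apply mul_right_cancel₀ hXne
        rw [hrec', ← pow_add, htt]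
      have : ((n:ℤ) + 1 + 1) = ((n + 1 : ℕ) : ℤ) + 1 := by push_cast; ring
      rw [this] at goal
      exact goal
  intro n _
  exact (main n).1
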